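/- Let V_∞ ≥ 0 and let f : ℝ → ℝ be continuous. Then for every λ ≥ 0, every admissible u with F∘u integrable, and every t > 0: I_λ^∞(u) ≥ I_λ^∞(u_t) + ((1 − t^N)/N)·P_λ^∞(u) + ((2 − N t^{N−2} + (N−2)t^N)/(2N))·‖∇u‖₂². -/

import Mathlib

open MeasureTheory Filter Topology

noncomputable section

/-- `ℝ^N` as a Euclidean space. -/
abbrev Euc (N : ℕ) := EuclideanSpace ℝ (Fin N)

/-- `u` is admissible: continuously differentiable, `u ∈ L²` and `∇u ∈ L²`. -/
def Admissible (N : ℕ) (u : Euc N → ℝ) : Prop :=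
  ContDiff ℝ 1 u ∧ MemLp u 2 (volume : Measure (Euc N)) ∧
    MemLp (gradient u) 2 (volume : Measure (Euc N))

/-- The dilation `u_t(x) = u(x/t)`. -/
def dil (N : ℕ) (t : ℝ) (u : Euc N → ℝ) : Euc N → ℝ := fun x => u (t⁻¹ • x)

/-- `F(t) = ∫₀ᵗ f(s) ds`. -/
def Fprim (f : ℝ → ℝ) (t : ℝ) : ℝ := ∫ s in (0:ℝ)..t, f s

/-- `‖∇u‖₂²`. -/
def gradN2 (N : ℕ) (u : Euc N → ℝ) : ℝ := ∫ x : Euc N, ‖gradient u x‖ ^ 2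

/-- `‖u‖₂²`. -/
def l2N2 (N : ℕ) (u : Euc N → ℝ) : ℝ := ∫ x : Euc N, (u x) ^ 2

/-- `∇V(x)·x`, the radial derivative of `V` at `x`. -/
def dV (N : ℕ) (V : Euc N → ℝ) (x : Euc N) : ℝ := fderiv ℝ V x x

/-- The energy functional `I`. -/
def Ifun (N : ℕ) (V : Euc N → ℝ) (f : ℝ → ℝ) (u : Euc N → ℝ) : ℝ :=
  (1/2) * (∫ x : Euc N, (‖gradient u x‖ ^ 2 + V x * (u x) ^ 2)) -
    ∫ x : Euc N, Fprim f (u x)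

/-- The limit energy functional `I^∞`. -/
def IfunInf (N : ℕ) (Vinf : ℝ) (f : ℝ → ℝ) (u : Euc N → ℝ) : ℝ :=
  (1/2) * (∫ x : Euc N, (‖gradient u x‖ ^ 2 + Vinf * (u x) ^ 2)) -
    ∫ x : Euc N, Fprim f (u x)

/-- The Pohožaev functional `P`. -/
def Pfun (N : ℕ) (V : Euc N → ℝ) (f : ℝ → ℝ) (u : Euc N → ℝ) : ℝ :=
  ((N : ℝ) - 2) / 2 * gradN2 N u
    + (1/2) * (∫ x : Euc N, ((N : ℝ) * V x + dV N V x) * (u x) ^ 2)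
    - (N : ℝ) * ∫ x : Euc N, Fprim f (u x)

/-- The limit Pohožaev functional `P^∞`. -/
def PfunInf (N : ℕ) (Vinf : ℝ) (f : ℝ → ℝ) (u : Euc N → ℝ) : ℝ :=
  ((N : ℝ) - 2) / 2 * gradN2 N u + (N : ℝ) * Vinf / 2 * l2N2 N u
    - (N : ℝ) * ∫ x : Euc N, Fprim f (u x)

/-- The family of functionals `I_λ`. -/
def IfunL (N : ℕ) (V : Euc N → ℝ) (f : ℝ → ℝ) (lam : ℝ) (u : Euc N → ℝ) : ℝ :=
  (1/2) * (∫ x : Euc N, (‖gradient u x‖ ^ 2 + V x * (u x) ^ 2)) -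
    lam * ∫ x : Euc N, Fprim f (u x)

/-- The family of Pohožaev functionals `P_λ`. -/
def PfunL (N : ℕ) (V : Euc N → ℝ) (f : ℝ → ℝ) (lam : ℝ) (u : Euc N → ℝ) : ℝ :=
  ((N : ℝ) - 2) / 2 * gradN2 N u
    + (1/2) * (∫ x : Euc N, ((N : ℝ) * V x + dV N V x) * (u x) ^ 2)
    - (N : ℝ) * lam * ∫ x : Euc N, Fprim f (u x)

/-- The family of limit functionals `I_λ^∞`. -/
def IfunInfL (N : ℕ) (Vinf : ℝ) (f : ℝ → ℝ) (lam : ℝ) (u : Euc N → ℝ) : ℝ :=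
  (1/2) * (∫ x : Euc N, (‖gradient u x‖ ^ 2 + Vinf * (u x) ^ 2)) -
    lam * ∫ x : Euc N, Fprim f (u x)

/-- The family of limit Pohožaev functionals `P_λ^∞`. -/
def PfunInfL (N : ℕ) (Vinf : ℝ) (f : ℝ → ℝ) (lam : ℝ) (u : Euc N → ℝ) : ℝ :=
  ((N : ℝ) - 2) / 2 * gradN2 N u + (N : ℝ) * Vinf / 2 * l2N2 N u
    - (N : ℝ) * lam * ∫ x : Euc N, Fprim f (u x)

/-- (V1): `V` is continuous and nonnegative. -/
def V1cond (N : ℕ) (V : Euc N → ℝ) : Prop := Continuous V ∧ ∀ x, 0 ≤ V x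

/-- (V2): `V(y) → V_∞` as `|y| → ∞` and `V ≤ V_∞`. -/
def V2cond (N : ℕ) (V : Euc N → ℝ) (Vinf : ℝ) : Prop :=
  Tendsto V (cocompact (Euc N)) (𝓝 Vinf) ∧ ∀ x, V x ≤ Vinf

/-- (V3) with the parameter `θ ∈ [0,1)` made explicit. -/
def V3cond (N : ℕ) (V : Euc N → ℝ) (θ : ℝ) : Prop :=
  ContDiff ℝ 1 V ∧ 0 ≤ θ ∧ θ < 1 ∧
    ∀ x : Euc N, x ≠ 0 → ∀ t : ℝ, 0 < t →
      (1 ≤ t → 0 ≤ (N : ℝ) * (V x - V (t • x)) + (dV N V x - dV N V (t • x))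
        + ((N : ℝ) - 2) ^ 3 * θ / (4 * t ^ 2 * ‖x‖ ^ 2) * (t ^ 2 - 1)) ∧
      (t < 1 → (N : ℝ) * (V x - V (t • x)) + (dV N V x - dV N V (t • x))
        + ((N : ℝ) - 2) ^ 3 * θ / (4 * t ^ 2 * ‖x‖ ^ 2) * (t ^ 2 - 1) ≤ 0)

/-- (V4) with the parameter `θ ∈ [0,1)` made explicit. -/
def V4cond (N : ℕ) (V : Euc N → ℝ) (θ : ℝ) : Prop :=
  ContDiff ℝ 1 V ∧ 0 ≤ θ ∧ θ < 1 ∧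
    ∀ x : Euc N, x ≠ 0 → dV N V x ≤ ((N : ℝ) - 2) ^ 2 * θ / (2 * ‖x‖ ^ 2)

/-- (F1): continuity and subcritical growth `|f(t)| ≤ C₀(1 + |t|^{2^*-1})`. -/
def F1cond (N : ℕ) (f : ℝ → ℝ) : Prop :=
  Continuous f ∧ ∃ C₀ > (0:ℝ), ∀ t : ℝ,
    |f t| ≤ C₀ * (1 + |t| ^ (((N : ℝ) + 2) / ((N : ℝ) - 2)))

/-- (F2): `f(t) = o(t)` at `0` and `f(t) = o(|t|^{(N+2)/(N-2)})` at infinity. -/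
def F2cond (N : ℕ) (f : ℝ → ℝ) : Prop :=
  Tendsto (fun t => f t / t) (𝓝[≠] (0:ℝ)) (𝓝 0) ∧
    Tendsto (fun t : ℝ => f t / |t| ^ (((N : ℝ) + 2) / ((N : ℝ) - 2)))
      (cocompact ℝ) (𝓝 0)

/-- (F3): there exists `s₀` with `F(s₀) > (1/2)V_∞ s₀²`. -/
def F3cond (f : ℝ → ℝ) (Vinf : ℝ) : Prop :=
  ∃ s₀ : ℝ, (1/2) * Vinf * s₀ ^ 2 < Fprim f s₀

lemma gradient_comp_smul (N : ℕ) (u : Euc N → ℝ) (hu : Differentiable ℝ u) (c : ℝ) (x : Euc N) :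
    gradient (fun y => u (c • y)) x = c • gradient u (c • x) := by
  have h1 : HasFDerivAt (fun y : Euc N => c • y) (c • ContinuousLinearMap.id ℝ (Euc N)) x :=
    (c • ContinuousLinearMap.id ℝ (Euc N)).hasFDerivAt
  have h3 := ((hu (c • x)).hasFDerivAt).comp x h1
  have h4 : (fderiv ℝ u (c • x)).comp (c • ContinuousLinearMap.id ℝ (Euc N))
      = c • fderiv ℝ u (c • x) := by
    ext v; simp
  have h3' : HasFDerivAt (fun y => u (c • y))
      ((fderiv ℝ u (c • x)).comp (c • ContinuousLinearMap.id ℝ (Euc N))) x := h3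
  rw [gradient, h3'.fderiv, h4, _root_.map_smul, gradient]

lemma integral_comp_inv_smul_euc (N : ℕ) (t : ℝ) (ht : 0 ≤ t) (g : Euc N → ℝ) :
    ∫ x : Euc N, g (t⁻¹ • x) = t ^ N * ∫ x : Euc N, g x := by
  rw [MeasureTheory.Measure.integral_comp_inv_smul_of_nonneg volume g ht,
    finrank_euclideanSpace_fin, smul_eq_mul]

/-- the IIP inequality (4.3) for the family `I_λ^∞`, `λ ≥ 0`. -/
theorem stmt_15 (N : ℕ) (hN : 3 ≤ N) (Vinf : ℝ) (hVinf : 0 ≤ Vinf)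
    (f : ℝ → ℝ) (hf : Continuous f) :
    ∀ lam : ℝ, 0 ≤ lam → ∀ u : Euc N → ℝ, Admissible N u →
      Integrable (fun x : Euc N => Fprim f (u x)) →
      ∀ t : ℝ, 0 < t →
      IfunInfL N Vinf f lam u ≥
        IfunInfL N Vinf f lam (dil N t u)
          + (1 - t ^ N) / (N : ℝ) * PfunInfL N Vinf f lam u
          + (2 - (N : ℝ) * t ^ (N - 2) + ((N : ℝ) - 2) * t ^ N) / (2 * (N : ℝ)) *
              gradN2 N u := by
  intro lam hlam u hu hF t ht
  obtain ⟨hC1, hL2, hG2⟩ := hu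
  have hdiff : Differentiable ℝ u := hC1.differentiable one_ne_zero
  have intA : Integrable (fun x : Euc N => ‖gradient u x‖ ^ 2) := hG2.norm.integrable_sq
  have intB : Integrable (fun x : Euc N => (u x) ^ 2) := hL2.integrable_sq
  have hsplit : (∫ x : Euc N, (‖gradient u x‖ ^ 2 + Vinf * (u x) ^ 2))
      = gradN2 N u + Vinf * l2N2 N u := by
    rw [integral_add intA (intB.const_mul Vinf), integral_const_mul]; rfl
  have hgrad : ∀ x : Euc N, gradient (dil N t u) x = t⁻¹ • gradient u (t⁻¹ • x) :=
    fun x => gradient_comp_smul N u hdiff t⁻¹ x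
  have key1 : (∫ x : Euc N, (‖gradient (dil N t u) x‖ ^ 2 + Vinf * (dil N t u x) ^ 2))
      = t ^ N * ((t⁻¹) ^ 2 * gradN2 N u + Vinf * l2N2 N u) := by
    have hpt : ∀ x : Euc N, ‖gradient (dil N t u) x‖ ^ 2 + Vinf * (dil N t u x) ^ 2
        = (fun y : Euc N => (t⁻¹) ^ 2 * ‖gradient u y‖ ^ 2 + Vinf * (u y) ^ 2) (t⁻¹ • x) := by
      intro x
      simp only [hgrad, dil, norm_smul, mul_pow, Real.norm_eq_abs, sq_abs]
    have hcomp := integral_comp_inv_smul_euc N t ht.le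
      (fun y : Euc N => (t⁻¹) ^ 2 * ‖gradient u y‖ ^ 2 + Vinf * (u y) ^ 2)
    beta_reduce at hcomp
    simp_rw [hpt]
    rw [hcomp, integral_add (intA.const_mul _) (intB.const_mul Vinf),
      integral_const_mul, integral_const_mul]
    rfl
  have key2 : (∫ x : Euc N, Fprim f (dil N t u x))
      = t ^ N * ∫ x : Euc N, Fprim f (u x) :=
    integral_comp_inv_smul_euc N t ht.le (fun y => Fprim f (u y))
  have hNt : t ^ (N - 2) * t ^ 2 = t ^ N := by
    rw [← pow_add, Nat.sub_add_cancel (by omega)]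
  have hN0 : (N : ℝ) ≠ 0 := by positivity
  have ht0 : t ≠ 0 := ht.ne'
  rw [ge_iff_le]
  apply le_of_eq
  simp only [IfunInfL, PfunInfL]
  rw [hsplit, key1, key2, ← hNt]
  field_simp
  ring
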